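/- arXiv:2602.21832 — 6 statements merged into one kernel-verified Lean document; each statement's English description precedes it below -/
import Mathlib

section
/- Let θ ∈ (0, π/2), n ≥ 1, and u ∈ S^n_θ; write t := ⟨u, e_{n+1}⟩ and ζ := u − cos θ e_{n+1} ∈ 𝒞_θ. Let P_u denote the orthogonal projection of ℝ^{n+1} onto the hyperplane u^⊥ (the tangent space of S^n at u). Then the tangential gradient of ℓ at ζ, namely ∇ℓ(ζ) = −cos θ · P_u(e_{n+1}), satisfies ‖∇ℓ(ζ)‖² = cos²θ (1 − t²) ≤ (2 cos²θ / (1 − cos θ)) · ℓ(ζ)². In particular, |∇ℓ|² ≤ c(θ) ℓ² holds on 𝒞_θ with the explicit constant c(θ) = 2 cos²θ / (1 − cos θ). -/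
open Real
open scoped RealInnerProductSpace

/-- Let `θ ∈ (0, π/2)`, `n ≥ 1`, `u ∈ S^n_θ` with `t := ⟨u, e_{n+1}⟩`,
and `ζ := u - cos θ • e_{n+1} ∈ 𝒞_θ`.  The tangential gradient of
`ℓ(ζ) = sin²θ - cos θ ⟨ζ, e_{n+1}⟩` at `ζ` is `∇ℓ(ζ) = -cos θ • P_u(e_{n+1})`, where
`P_u x = x - ⟨x, u⟩ u` is the orthogonal projection onto `u^⊥`.  Then
`‖∇ℓ(ζ)‖² = cos²θ (1 - t²) ≤ (2 cos²θ / (1 - cos θ)) ℓ(ζ)²`. -/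
theorem capillary_ell_gradient_estimate (n : ℕ) (hn : 1 ≤ n) (θ : ℝ)
    (hθ : θ ∈ Set.Ioo 0 (π / 2))
    (e : EuclideanSpace ℝ (Fin (n + 1)))
    (he : e = EuclideanSpace.single (Fin.last n) 1)
    (u : EuclideanSpace ℝ (Fin (n + 1))) (hu : ‖u‖ = 1)
    (t : ℝ) (ht : t = ⟪u, e⟫) (hut : Real.cos θ ≤ t)
    (ζ : EuclideanSpace ℝ (Fin (n + 1))) (hζ : ζ = u - Real.cos θ • e)
    (gradℓ : EuclideanSpace ℝ (Fin (n + 1)))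
    (hgrad : gradℓ = (-Real.cos θ) • (e - ⟪e, u⟫ • u)) :
    ‖gradℓ‖ ^ 2 = Real.cos θ ^ 2 * (1 - t ^ 2) ∧
      ‖gradℓ‖ ^ 2 ≤ 2 * Real.cos θ ^ 2 / (1 - Real.cos θ) *
        (Real.sin θ ^ 2 - Real.cos θ * ⟪ζ, e⟫) ^ 2 := by

  have he1 : ‖e‖ = 1 := by
    rw [he, EuclideanSpace.norm_single]; norm_num
  have heu : ⟪e, u⟫ = t := by rw [ht, real_inner_comm]
  have ht1 : t ≤ 1 := by
    calc t = ⟪u, e⟫ := ht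
    _ ≤ ‖u‖ * ‖e‖ := real_inner_le_norm u e
    _ = 1 := by rw [hu, he1]; ring
  have hcos0 : 0 < Real.cos θ := Real.cos_pos_of_mem_Ioo
    ⟨by linarith [hθ.1, Real.pi_pos], hθ.2⟩
  have hcos1 : Real.cos θ < 1 := by
    have h := Real.cos_lt_cos_of_nonneg_of_le_pi (le_refl 0)
      (by linarith [hθ.2, Real.pi_pos]) hθ.1
    simpa using h
  have hnorm : ‖e - t • u‖ ^ 2 = 1 - t ^ 2 := by
    rw [@norm_sub_sq_real, real_inner_smul_right, norm_smul, heu, hu, he1]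
    simp [abs_of_nonneg (le_trans hcos0.le hut)]
    ring
  have hmain : ‖gradℓ‖ ^ 2 = Real.cos θ ^ 2 * (1 - t ^ 2) := by
    rw [hgrad, heu, norm_smul, mul_pow, hnorm]
    simp [sq_abs]
  have hζe : ⟪ζ, e⟫ = t - Real.cos θ := by
    rw [hζ, inner_sub_left, real_inner_smul_left, real_inner_self_eq_norm_sq,
      he1, ← ht]
    ring
  refine ⟨hmain, ?_⟩
  rw [hmain, hζe]
  have hsin : Real.sin θ ^ 2 = 1 - Real.cos θ ^ 2 := by
    have := Real.sin_sq_add_cos_sq θ; linarith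
  rw [hsin]
  rw [div_mul_eq_mul_div, le_div_iff₀ (by linarith)]
  have hab : (1 - t) * (1 - Real.cos θ) ≤ (1 - Real.cos θ * t) * (1 - Real.cos θ * t) := by
    apply mul_le_mul <;> nlinarith
  nlinarith [mul_le_mul_of_nonneg_left hab (sq_nonneg (Real.cos θ)),
    mul_nonneg (mul_nonneg (sq_nonneg (Real.cos θ)) (sq_nonneg (1 - t)))
      (sub_nonneg.2 hcos1.le)]
end

section
/- Let n ≥ 1 and let K ⊂ ℝ^{n+1} be a convex body contained in the closed upper half-space {x : x_{n+1} ≥ 0}. Suppose that at every point x ∈ K with x_{n+1} > 0, every outer unit normal v of K at x satisfies ⟨v, e_{n+1}⟩ > 0. Then for every x = (x', x_{n+1}) ∈ K, the point (x', 0) also belongs to K; that is, the image of K under orthogonal projection onto the hyperplane {x_{n+1} = 0} equals the slice K ∩ {x : x_{n+1} = 0}. -/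
set_option maxHeartbeats 1000000


open Real
open scoped RealInnerProductSpace

/-- Let `n ≥ 1` and let `K ⊂ ℝ^{n+1}` be a convex body contained in the
closed upper half-space `{x : x_{n+1} ≥ 0}`.  Suppose that at every point `x ∈ K` with
`x_{n+1} > 0`, every outer unit normal `v` of `K` at `x` satisfies `⟨v, e_{n+1}⟩ > 0`.
Then for every `x = (x', x_{n+1}) ∈ K`, the point `(x', 0)` also belongs to `K`; that is,
the orthogonal projection of `K` onto the hyperplane `{x_{n+1} = 0}` equals the slice
`K ∩ {x : x_{n+1} = 0}`. -/
theorem capillary_body_projection_in_slice (n : ℕ) (hn : 1 ≤ n)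
    (e : EuclideanSpace ℝ (Fin (n + 1)))
    (he : e = EuclideanSpace.single (Fin.last n) 1)
    (K : Set (EuclideanSpace ℝ (Fin (n + 1))))
    (hKcpt : IsCompact K) (hKconv : Convex ℝ K) (hKint : (interior K).Nonempty)
    (hKupper : ∀ x ∈ K, 0 ≤ ⟪x, e⟫)
    (hnormal : ∀ x ∈ K, 0 < ⟪x, e⟫ →
      ∀ v : EuclideanSpace ℝ (Fin (n + 1)), ‖v‖ = 1 →
        (∀ y ∈ K, ⟪y - x, v⟫ ≤ 0) → 0 < ⟪v, e⟫) :
    (∀ x ∈ K, x - ⟪x, e⟫ • e ∈ K) ∧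
      (fun x : EuclideanSpace ℝ (Fin (n + 1)) => x - ⟪x, e⟫ • e) '' K
        = K ∩ {x | ⟪x, e⟫ = 0} := by
  have hne : ‖e‖ = 1 := by
    rw [he, EuclideanSpace.norm_single]; norm_num
  have hee : ⟪e, e⟫ = 1 := by
    rw [real_inner_self_eq_norm_sq, hne]; norm_num
  have main : ∀ x ∈ K, x - ⟪x, e⟫ • e ∈ K := by
    intro x hx
    set c := ⟪x, e⟫ with hc
    have hc0 : 0 ≤ c := hKupper x hx
    set S : Set ℝ := {t | t ∈ Set.Icc 0 c ∧ x - t • e ∈ K} with hS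
    have hSne : S.Nonempty := ⟨0, ⟨le_refl 0, hc0⟩, by simpa using hx⟩
    have hSbdd : BddAbove S := ⟨c, fun t ht => ht.1.2⟩
    have hSclosed : IsClosed S := by
      apply IsClosed.inter isClosed_Icc
      exact IsClosed.preimage (continuous_const.sub (continuous_id.smul continuous_const)) hKcpt.isClosed
    set t₀ := sSup S with ht₀
    have ht₀S : t₀ ∈ S := hSclosed.csSup_mem hSne hSbdd
    have hz : x - t₀ • e ∈ K := ht₀S.2
    have hze : ⟪x - t₀ • e, e⟫ = c - t₀ := by
      rw [inner_sub_left, real_inner_smul_left, hee, mul_one]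
    by_contra hxe
    have ht₀lt : t₀ < c := by
      rcases lt_or_eq_of_le ht₀S.1.2 with h | h
      · exact h
      · exact absurd (by rw [← h]; exact hz) hxe
    set ε := (c - t₀) / 3 with hε
    have hεpos : 0 < ε := by rw [hε]; linarith
    set q := x - (t₀ + ε) • e with hq
    have hqz : q = (x - t₀ • e) - ε • e := by
      rw [hq, add_smul, sub_sub]
    have hqK : q ∉ K := by
      intro hqK
      have hmem : t₀ + ε ∈ S := ⟨⟨by linarith [ht₀S.1.1], by rw [hε]; linarith⟩, hqK⟩
      have := le_csSup hSbdd hmem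
      rw [← ht₀] at this
      linarith
    obtain ⟨p, hpK, hpmin⟩ :=
      exists_norm_eq_iInf_of_complete_convex ⟨x, hx⟩ hKcpt.isClosed.isComplete hKconv q
    have hproj : ∀ w ∈ K, ⟪q - p, w - p⟫ ≤ 0 :=
      (norm_eq_iInf_iff_real_inner_le_zero hKconv hpK).mp hpmin
    have hqp : q - p ≠ 0 := by
      intro h
      exact hqK (by rwa [sub_eq_zero.mp h])
    have hqpnorm : 0 < ‖q - p‖ := norm_pos_iff.mpr hqp
    have hqznorm : ‖q - (x - t₀ • e)‖ = ε := by
      rw [hqz]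
      simp [norm_smul, hne, abs_of_pos hεpos]
    have hle : ‖q - p‖ ≤ ε := by
      rw [hpmin, ← hqznorm]
      exact ciInf_le ⟨0, Set.forall_mem_range.2 fun _ => norm_nonneg _⟩
        (⟨x - t₀ • e, hz⟩ : K)
    -- p is close to x - t₀ • e, so its height is positive
    have hpz : ‖p - (x - t₀ • e)‖ ≤ 2 * ε := by
      calc ‖p - (x - t₀ • e)‖ ≤ ‖p - q‖ + ‖q - (x - t₀ • e)‖ := norm_sub_le_norm_sub_add_norm_sub _ _ _
        _ ≤ ε + ε := by rw [hqznorm, ← norm_sub_rev q p]; linarith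
        _ = 2 * ε := by ring
    have hppos : 0 < ⟪p, e⟫ := by
      have h1 : ⟪p - (x - t₀ • e), e⟫ ≥ -(2 * ε) := by
        have := abs_real_inner_le_norm (p - (x - t₀ • e)) e
        rw [hne, mul_one] at this
        have h2 := (abs_le.mp this).1
        linarith [hpz, h2, neg_le_neg hpz]
      have h3 : ⟪p, e⟫ = (c - t₀) + ⟪p - (x - t₀ • e), e⟫ := by
        rw [← hze, ← inner_add_left]; congr 1; abel
      rw [h3]
      have : c - t₀ = 3 * ε := by rw [hε]; ring
      linarith
    set v := ‖q - p‖⁻¹ • (q - p) with hv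
    have hvnorm : ‖v‖ = 1 := by
      rw [hv, norm_smul, norm_inv, norm_norm, inv_mul_cancel₀ (ne_of_gt hqpnorm)]
    have houter : ∀ y ∈ K, ⟪y - p, v⟫ ≤ 0 := by
      intro y hy
      rw [hv, real_inner_smul_right]
      have := hproj y hy
      rw [real_inner_comm] at this
      exact mul_nonpos_of_nonneg_of_nonpos (inv_nonneg.mpr (norm_nonneg _)) this
    have hvpos := hnormal p hpK hppos v hvnorm houter
    -- derive contradiction: ⟪q - p, e⟫ < 0
    have hqpe : ⟪q - p, e⟫ < 0 := by
      have h1 : ⟪q - p, q - p⟫ = ⟪(x - t₀ • e) - p, q - p⟫ + ⟪q - (x - t₀ • e), q - p⟫ := by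
        rw [← inner_add_left]; congr 1; abel
      have h2 : ⟪(x - t₀ • e) - p, q - p⟫ ≤ 0 := by
        have := hproj (x - t₀ • e) hz
        rwa [real_inner_comm] at this
      have h3 : ⟪q - (x - t₀ • e), q - p⟫ = -ε * ⟪e, q - p⟫ := by
        have h5 : q - (x - t₀ • e) = (-ε) • e := by rw [hqz, neg_smul]; abel
        rw [h5, real_inner_smul_left]
      have h4 : ‖q - p‖ ^ 2 ≤ -ε * ⟪e, q - p⟫ := by
        rw [← real_inner_self_eq_norm_sq]
        linarith [h1, h2, h3]
      rw [real_inner_comm] at h4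
      nlinarith [pow_pos hqpnorm 2, hεpos, h4]
    have hvele : ⟪v, e⟫ = ‖q - p‖⁻¹ * ⟪q - p, e⟫ := by
      rw [hv, real_inner_smul_left]
    rw [hvele] at hvpos
    have := mul_neg_of_pos_of_neg (inv_pos.mpr hqpnorm) hqpe
    linarith
  refine ⟨main, ?_⟩
  ext y
  constructor
  · rintro ⟨x, hx, rfl⟩
    refine ⟨main x hx, ?_⟩
    simp only [Set.mem_setOf_eq]
    rw [inner_sub_left, real_inner_smul_left, hee, mul_one, sub_self]
  · rintro ⟨hyK, hy0⟩
    exact ⟨y, hyK, by simp [Set.mem_setOf_eq.mp hy0]⟩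
end

section
/- Let θ ∈ (0, π/2), n ≥ 1, and let K ⊂ ℝ^{n+1} be a convex body contained in the closed upper half-space {x : x_{n+1} ≥ 0} such that K ∩ {x : x_{n+1} = 0} is nonempty and, at every point x ∈ K with x_{n+1} > 0, every outer unit normal v of K at x satisfies ⟨v, e_{n+1}⟩ > cos θ. Then for every unit vector ũ with ⟨ũ, e_{n+1}⟩ = 0, one has h_K(sin θ · ũ + cos θ · e_{n+1}) = sin θ · max{⟨x, ũ⟩ : x ∈ K ∩ {x_{n+1} = 0}}. (That is, the capillary support function of K restricted to the boundary circle of the cap is sin θ times the support function of the base Ω = K ∩ {x_{n+1} = 0}.) -/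
open Real
open scoped RealInnerProductSpace

/-- Let `θ ∈ (0, π/2)`, `n ≥ 1`, and let `K ⊂ ℝ^{n+1}` be a convex body
contained in the closed upper half-space whose slice `K ∩ {x_{n+1} = 0}` is nonempty and
such that, at every point `x ∈ K` with `x_{n+1} > 0`, every outer unit normal `v` of `K`
at `x` satisfies `⟨v, e_{n+1}⟩ > cos θ`.  Then for every unit vector `w̃` with
`⟨w̃, e_{n+1}⟩ = 0` one has
`h_K(sin θ • w̃ + cos θ • e_{n+1}) = sin θ · sup {⟨x, w̃⟩ : x ∈ K ∩ {x_{n+1} = 0}}`. -/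
theorem capillary_support_on_boundary_circle (n : ℕ) (hn : 1 ≤ n) (θ : ℝ)
    (hθ : θ ∈ Set.Ioo 0 (π / 2))
    (e : EuclideanSpace ℝ (Fin (n + 1)))
    (he : e = EuclideanSpace.single (Fin.last n) 1)
    (K : Set (EuclideanSpace ℝ (Fin (n + 1))))
    (hKcpt : IsCompact K) (hKconv : Convex ℝ K) (hKint : (interior K).Nonempty)
    (hKupper : ∀ x ∈ K, 0 ≤ ⟪x, e⟫)
    (hslice : (K ∩ {x | ⟪x, e⟫ = 0}).Nonempty)
    (hnormal : ∀ x ∈ K, 0 < ⟪x, e⟫ →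
      ∀ v : EuclideanSpace ℝ (Fin (n + 1)), ‖v‖ = 1 →
        (∀ y ∈ K, ⟪y - x, v⟫ ≤ 0) → Real.cos θ < ⟪v, e⟫) :
    ∀ w : EuclideanSpace ℝ (Fin (n + 1)), ‖w‖ = 1 → ⟪w, e⟫ = 0 →
      sSup ((fun x => ⟪x, Real.sin θ • w + Real.cos θ • e⟫) '' K)
        = Real.sin θ * sSup ((fun x => ⟪x, w⟫) '' (K ∩ {x | ⟪x, e⟫ = 0})) := by
  intro w hw hwe
  have hsin : 0 < Real.sin θ := Real.sin_pos_of_pos_of_lt_pi hθ.1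
    (lt_trans hθ.2 (by linarith [Real.pi_pos]))
  have hene : ‖e‖ = 1 := by
    rw [he, EuclideanSpace.norm_single]; norm_num
  set u : EuclideanSpace ℝ (Fin (n + 1)) := Real.sin θ • w + Real.cos θ • e with hu
  have hue : ⟪u, e⟫ = Real.cos θ := by
    rw [hu, inner_add_left, real_inner_smul_left, real_inner_smul_left,
      hwe, real_inner_self_eq_norm_sq, hene]
    ring
  have hunorm : ‖u‖ = 1 := by
    have h1 : ‖u‖ ^ 2 = 1 := by
      rw [hu, norm_add_sq_real, norm_smul, norm_smul, real_inner_smul_left,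
        real_inner_smul_right, hwe, hw, hene, Real.norm_eq_abs, Real.norm_eq_abs,
        abs_of_pos hsin]
      have := Real.sin_sq_add_cos_sq θ
      rcases abs_cases (Real.cos θ) with ⟨h, _⟩ | ⟨h, _⟩ <;> rw [h] <;> nlinarith
    nlinarith [norm_nonneg u]
  -- continuity of the linear functionals
  have hcont : Continuous fun x : EuclideanSpace ℝ (Fin (n + 1)) => ⟪x, u⟫ :=
    Continuous.inner continuous_id continuous_const
  have hKne : K.Nonempty := ⟨hslice.choose, hslice.choose_spec.1⟩
  obtain ⟨x₀, hx₀K, hx₀max⟩ := hKcpt.exists_isMaxOn hKne hcont.continuousOn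
  have hmax : ∀ y ∈ K, ⟪y, u⟫ ≤ ⟪x₀, u⟫ := fun y hy => hx₀max hy
  have hnorm : ∀ y ∈ K, ⟪y - x₀, u⟫ ≤ 0 := by
    intro y hy
    rw [inner_sub_left]
    linarith [hmax y hy]
  have hx₀e : ⟪x₀, e⟫ = 0 := by
    by_contra h
    have hpos : 0 < ⟪x₀, e⟫ := lt_of_le_of_ne (hKupper x₀ hx₀K) (Ne.symm h)
    have := hnormal x₀ hx₀K hpos u hunorm hnorm
    rw [hue] at this
    exact lt_irrefl _ this
  have hx₀slice : x₀ ∈ K ∩ {x | ⟪x, e⟫ = 0} := ⟨hx₀K, hx₀e⟩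
  have hx₀u : ⟪x₀, u⟫ = Real.sin θ * ⟪x₀, w⟫ := by
    rw [hu, inner_add_right, real_inner_smul_right, real_inner_smul_right, hx₀e]
    ring
  have hS1 : sSup ((fun x => ⟪x, u⟫) '' K) = ⟪x₀, u⟫ := by
    apply IsGreatest.csSup_eq
    exact ⟨⟨x₀, hx₀K, rfl⟩, by rintro _ ⟨y, hy, rfl⟩; exact hmax y hy⟩
  have hS2 : sSup ((fun x => ⟪x, w⟫) '' (K ∩ {x | ⟪x, e⟫ = 0})) = ⟪x₀, w⟫ := by
    apply IsGreatest.csSup_eq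
    refine ⟨⟨x₀, hx₀slice, rfl⟩, ?_⟩
    rintro _ ⟨y, ⟨hyK, hye⟩, rfl⟩
    have hyu : ⟪y, u⟫ = Real.sin θ * ⟪y, w⟫ := by
      rw [hu, inner_add_right, real_inner_smul_right, real_inner_smul_right, hye]
      ring
    have := hmax y hyK
    rw [hyu, hx₀u] at this
    exact le_of_mul_le_mul_left this hsin
  rw [hS1, hS2, hx₀u]
end

section
/- Let θ ∈ (0, π/2), n ≥ 1, and let K ⊂ ℝ^{n+1} be an even convex body contained in the closed upper half-space {x : x_{n+1} ≥ 0} such that K ∩ {x : x_{n+1} = 0} is nonempty and, at every point x ∈ K with x_{n+1} > 0, every outer unit normal v of K at x satisfies ⟨v, e_{n+1}⟩ > cos θ. Set H := max{x_{n+1} : x ∈ K} and, for unit vectors ũ with ⟨ũ, e_{n+1}⟩ = 0, let h(ũ) := max{⟨x, ũ⟩ : x ∈ K ∩ {x_{n+1} = 0}} be the support function of the base. Then cos θ · H ≤ sin θ · h(ũ) for every such ũ; in particular H ≤ tan θ · min_{ũ} h(ũ). -/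
open Real
open scoped RealInnerProductSpace

/-- Let `θ ∈ (0, π/2)`, `n ≥ 1`, and let `K ⊂ ℝ^{n+1}` be an even convex
body contained in the closed upper half-space with nonempty slice
`K ∩ {x_{n+1} = 0}` such that, at every point `x ∈ K` with `x_{n+1} > 0`, every outer unit
normal `v` of `K` at `x` satisfies `⟨v, e_{n+1}⟩ > cos θ`.  With
`H := max {x_{n+1} : x ∈ K}` and `h(w̃) := max {⟨x, w̃⟩ : x ∈ K ∩ {x_{n+1} = 0}}`, one has
`cos θ · H ≤ sin θ · h(w̃)` for every unit vector `w̃` with `⟨w̃, e_{n+1}⟩ = 0`; in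
particular `H ≤ tan θ · min h`. -/
theorem capillary_height_estimate (n : ℕ) (hn : 1 ≤ n) (θ : ℝ)
    (hθ : θ ∈ Set.Ioo 0 (π / 2))
    (e : EuclideanSpace ℝ (Fin (n + 1)))
    (he : e = EuclideanSpace.single (Fin.last n) 1)
    (K : Set (EuclideanSpace ℝ (Fin (n + 1))))
    (hKcpt : IsCompact K) (hKconv : Convex ℝ K) (hKint : (interior K).Nonempty)
    (hKupper : ∀ x ∈ K, 0 ≤ ⟪x, e⟫)
    (hslice : (K ∩ {x | ⟪x, e⟫ = 0}).Nonempty)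
    (hKeven : ∀ x ∈ K, (2 * ⟪x, e⟫) • e - x ∈ K)
    (hnormal : ∀ x ∈ K, 0 < ⟪x, e⟫ →
      ∀ v : EuclideanSpace ℝ (Fin (n + 1)), ‖v‖ = 1 →
        (∀ y ∈ K, ⟪y - x, v⟫ ≤ 0) → Real.cos θ < ⟪v, e⟫)
    (H : ℝ) (hH : H = sSup ((fun x => ⟪x, e⟫) '' K)) :
    ∀ w : EuclideanSpace ℝ (Fin (n + 1)), ‖w‖ = 1 → ⟪w, e⟫ = 0 →
      Real.cos θ * H
        ≤ Real.sin θ * sSup ((fun x => ⟪x, w⟫) '' (K ∩ {x | ⟪x, e⟫ = 0})) := by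
  intro w hw hwe
  obtain ⟨z, hzK, hze⟩ := hslice
  have hKne : K.Nonempty := ⟨z, hzK⟩
  have hπ := Real.pi_pos
  have hsθ : 0 < Real.sin θ := Real.sin_pos_of_pos_of_lt_pi hθ.1 (by linarith [hθ.2])
  have hcθ : 0 < Real.cos θ := Real.cos_pos_of_mem_Ioo ⟨by linarith [hθ.1], hθ.2⟩
  have hee : ⟪e, e⟫ = (1 : ℝ) := by
    rw [he, EuclideanSpace.inner_single_left]
    simp
  set v := Real.sin θ • w + Real.cos θ • e with hv
  have hinner : ∀ x : EuclideanSpace ℝ (Fin (n + 1)),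
      ⟪x, v⟫ = Real.sin θ * ⟪x, w⟫ + Real.cos θ * ⟪x, e⟫ := by
    intro x
    rw [hv, inner_add_right, real_inner_smul_right, real_inner_smul_right]
  have hve : ⟪v, e⟫ = Real.cos θ := by
    rw [hv, inner_add_left, real_inner_smul_left, real_inner_smul_left, hwe, hee]
    ring
  have hnv : ‖v‖ = 1 := by
    have hvv : ⟪v, v⟫ = (1 : ℝ) := by
      have hww : ⟪w, w⟫ = (1 : ℝ) := by
        rw [real_inner_self_eq_norm_sq, hw]; norm_num
      have hwv : ⟪w, v⟫ = Real.sin θ := by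
        rw [hv, inner_add_right, real_inner_smul_right, real_inner_smul_right,
          hww, hwe]
        ring
      have hev : ⟪e, v⟫ = Real.cos θ := by rw [real_inner_comm]; exact hve
      rw [hv, inner_add_left, real_inner_smul_left, real_inner_smul_left,
        hwv, hev]
      nlinarith [Real.sin_sq_add_cos_sq θ]
    have h2 : ‖v‖ ^ 2 = 1 := by rw [← real_inner_self_eq_norm_sq, hvv]
    nlinarith [norm_nonneg v]
  have hcont : ∀ u : EuclideanSpace ℝ (Fin (n + 1)),
      Continuous fun x : EuclideanSpace ℝ (Fin (n + 1)) => ⟪x, u⟫ := by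
    intro u
    exact continuous_id.inner continuous_const
  -- maximizer of ⟪·, v⟫ lies in the slice
  obtain ⟨x₀, hx₀K, hx₀max⟩ := hKcpt.exists_isMaxOn hKne (hcont v).continuousOn
  have hx₀e : ⟪x₀, e⟫ = 0 := by
    by_contra hne0
    have hpos : 0 < ⟪x₀, e⟫ := lt_of_le_of_ne (hKupper _ hx₀K) (Ne.symm hne0)
    have := hnormal x₀ hx₀K hpos v hnv (fun y hy => by
      rw [inner_sub_left]
      exact sub_nonpos.2 (hx₀max hy))
    rw [hve] at this
    exact lt_irrefl _ this
  -- bound on the base support function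
  have hbdd : BddAbove ((fun x => ⟪x, w⟫) '' (K ∩ {x | ⟪x, e⟫ = 0})) :=
    ((hKcpt.image (hcont w)).bddAbove).mono
      (Set.image_mono Set.inter_subset_left)
  have hx₀h : ⟪x₀, w⟫ ≤ sSup ((fun x => ⟪x, w⟫) '' (K ∩ {x | ⟪x, e⟫ = 0})) :=
    le_csSup hbdd ⟨x₀, ⟨hx₀K, hx₀e⟩, rfl⟩
  -- maximizer of height
  obtain ⟨x₁, hx₁K, hx₁max⟩ := hKcpt.exists_isMaxOn hKne (hcont e).continuousOn
  have hHx : H = ⟪x₁, e⟫ := by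
    rw [hH]
    refine le_antisymm (csSup_le (hKne.image _) ?_) (le_csSup ((hKcpt.image (hcont e)).bddAbove) ⟨x₁, hx₁K, rfl⟩)
    rintro _ ⟨y, hy, rfl⟩
    exact hx₁max hy
  -- reflect x₁ if needed so that ⟪y, w⟫ ≥ 0
  obtain ⟨y, hyK, hye, hyw⟩ :
      ∃ y ∈ K, ⟪y, e⟫ = H ∧ 0 ≤ ⟪y, w⟫ := by
    rcases le_or_gt 0 ⟪x₁, w⟫ with h | h
    · exact ⟨x₁, hx₁K, hHx.symm, h⟩
    · refine ⟨(2 * ⟪x₁, e⟫) • e - x₁, hKeven x₁ hx₁K, ?_, ?_⟩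
      · rw [inner_sub_left, real_inner_smul_left, hee, hHx]; ring
      · have hew : ⟪e, w⟫ = (0 : ℝ) := by rw [real_inner_comm]; exact hwe
        rw [inner_sub_left, real_inner_smul_left, hew]
        linarith
  -- conclude
  have h1 : ⟪y, v⟫ ≤ ⟪x₀, v⟫ := hx₀max hyK
  rw [hinner, hinner, hx₀e, hye] at h1
  have h2 : Real.sin θ * ⟪x₀, w⟫ ≤
      Real.sin θ * sSup ((fun x => ⟪x, w⟫) '' (K ∩ {x | ⟪x, e⟫ = 0})) :=
    mul_le_mul_of_nonneg_left hx₀h hsθ.le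
  nlinarith [mul_nonneg hsθ.le hyw]
end

section
/- Let n ≥ 2, θ ∈ (0, π/2), γ ∈ (0, 2), and C₀, R > 0. Let K ⊂ ℝ^{n+1} be a convex body contained in the closed upper half-space {x : x_{n+1} ≥ 0} with 0 ∈ K ∩ {x_{n+1} = 0}, such that at every point x ∈ K with x_{n+1} > 0, every outer unit normal v of K at x satisfies ⟨v, e_{n+1}⟩ > cos θ, and such that the support function h_K is differentiable at every point of ℝ^{n+1} \ {0}. Define s on the cap 𝒞_θ by s(ζ) := h_K(ζ + cos θ e_{n+1}), and for ζ ∈ 𝒞_θ with u := ζ + cos θ e_{n+1} ∈ S^n define the tangential gradient ∇s(ζ) := ∇h_K(u) − ⟨∇h_K(u), u⟩ u. Assume the gradient estimate ‖∇s(ζ)‖² ≤ C₀ · s(ζ)^γ · R^{2−γ} holds for all ζ ∈ 𝒞_θ. Let h(ũ) := max{⟨x, ũ⟩ : x ∈ K ∩ {x_{n+1} = 0}} for unit vectors ũ with ⟨ũ, e_{n+1}⟩ = 0. Then for every such ũ, setting w := sin θ · ũ + cos θ · e_{n+1} and letting Q denote the orthogonal projection of ℝ^{n+1} onto the orthogonal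 complement of span{ũ, e_{n+1}} (so that Q(∇h_K(w)) is the spherical gradient of h at ũ), one has ‖Q(∇h_K(w))‖² ≤ C₀ · (sin θ)^γ · R^{2−γ} · h(ũ)^γ. -/
set_option maxHeartbeats 800000

open Real
open scoped RealInnerProductSpace

/-- For an even-style setup: `n ≥ 2`, `θ ∈ (0, π/2)`, `γ ∈ (0, 2)`,
`C₀, R > 0`, and `K ⊂ ℝ^{n+1}` a convex body in the closed upper half-space with
`0 ∈ K ∩ {x_{n+1} = 0}`, whose outer unit normals at points of positive height satisfy
`⟨v, e_{n+1}⟩ > cos θ`, and whose support function `h_K` is differentiable away from `0`.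
If the capillary support function `s(ζ) = h_K(ζ + cos θ e_{n+1})` satisfies the gradient
estimate `‖∇s‖² ≤ C₀ s^γ R^{2-γ}` on `𝒞_θ` (where `∇s(ζ)` is the projection of
`∇h_K(u)` onto `u^⊥`, `u = ζ + cos θ e_{n+1}`), then the support function
`h(w̃) = max {⟨x, w̃⟩ : x ∈ K ∩ {x_{n+1} = 0}}` of the base satisfies
`‖∇̂h‖² ≤ C₀ (sin θ)^γ R^{2-γ} h^γ` on `S^{n-1}`, where `∇̂h(w̃)` is the projection of
`∇h_K(sin θ w̃ + cos θ e_{n+1})` onto the orthogonal complement of `span {w̃, e_{n+1}}`. -/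
theorem base_gradient_estimate (n : ℕ) (hn : 2 ≤ n) (θ γ C₀ R : ℝ)
    (hθ : θ ∈ Set.Ioo 0 (π / 2)) (hγ : γ ∈ Set.Ioo (0 : ℝ) 2)
    (hC₀ : 0 < C₀) (hR : 0 < R)
    (e : EuclideanSpace ℝ (Fin (n + 1)))
    (he : e = EuclideanSpace.single (Fin.last n) 1)
    (K : Set (EuclideanSpace ℝ (Fin (n + 1))))
    (hKcpt : IsCompact K) (hKconv : Convex ℝ K) (hKint : (interior K).Nonempty)
    (hKupper : ∀ x ∈ K, 0 ≤ ⟪x, e⟫)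
    (h0K : (0 : EuclideanSpace ℝ (Fin (n + 1))) ∈ K)
    (hnormal : ∀ x ∈ K, 0 < ⟪x, e⟫ →
      ∀ v : EuclideanSpace ℝ (Fin (n + 1)), ‖v‖ = 1 →
        (∀ y ∈ K, ⟪y - x, v⟫ ≤ 0) → Real.cos θ < ⟪v, e⟫)
    (hK : EuclideanSpace ℝ (Fin (n + 1)) → ℝ)
    (hhK : hK = fun z => sSup ((fun x => ⟪x, z⟫) '' K))
    (hdiff : ∀ z : EuclideanSpace ℝ (Fin (n + 1)), z ≠ 0 → DifferentiableAt ℝ hK z)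
    (hgrad : ∀ u : EuclideanSpace ℝ (Fin (n + 1)), ‖u‖ = 1 → Real.cos θ ≤ ⟪u, e⟫ →
      ‖gradient hK u - ⟪gradient hK u, u⟫ • u‖ ^ 2 ≤ C₀ * hK u ^ γ * R ^ (2 - γ)) :
    ∀ w : EuclideanSpace ℝ (Fin (n + 1)), ‖w‖ = 1 → ⟪w, e⟫ = 0 →
      ‖gradient hK (Real.sin θ • w + Real.cos θ • e)
          - ⟪gradient hK (Real.sin θ • w + Real.cos θ • e), w⟫ • w
          - ⟪gradient hK (Real.sin θ • w + Real.cos θ • e), e⟫ • e‖ ^ 2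
        ≤ C₀ * Real.sin θ ^ γ * R ^ (2 - γ)
            * sSup ((fun x => ⟪x, w⟫) '' (K ∩ {x | ⟪x, e⟫ = 0})) ^ γ := by
  intro w hw1 hwe
  have he1 : ‖e‖ = 1 := by rw [he]; simp
  have hee : ⟪e, e⟫ = (1:ℝ) := by
    rw [real_inner_self_eq_norm_sq, he1]; norm_num
  have hww : ⟪w, w⟫ = (1:ℝ) := by
    rw [real_inner_self_eq_norm_sq, hw1]; norm_num
  have hew : ⟪e, w⟫ = 0 := by rw [real_inner_comm]; exact hwe
  have hsin : 0 < Real.sin θ :=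
    Real.sin_pos_of_pos_of_lt_pi hθ.1 (lt_trans hθ.2 (by linarith [Real.pi_pos]))
  have hcos : 0 < Real.cos θ :=
    Real.cos_pos_of_mem_Ioo ⟨by linarith [hθ.1, Real.pi_pos], hθ.2⟩
  set u := Real.sin θ • w + Real.cos θ • e with hu
  have hu2 : ‖u‖ ^ 2 = 1 := by
    rw [hu, norm_add_sq_real]
    simp only [norm_smul, inner_smul_left, inner_smul_right, hwe,
      Real.norm_eq_abs, abs_of_nonneg hsin.le, abs_of_nonneg hcos.le, hw1, he1, mul_pow]
    nlinarith [Real.sin_sq_add_cos_sq θ]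
  have hu1 : ‖u‖ = 1 := by nlinarith [norm_nonneg u]
  have hue : ⟪u, e⟫ = Real.cos θ := by
    rw [hu]; simp [inner_add_left, inner_smul_left, hwe, hee, he1]
  set g := gradient hK u with hg
  set a := g - ⟪g, w⟫ • w - ⟪g, e⟫ • e with ha
  have haw : ⟪a, w⟫ = 0 := by
    simp [ha, inner_sub_left, inner_smul_left, hww, hew, hw1]
  have hae : ⟪a, e⟫ = 0 := by
    simp [ha, inner_sub_left, inner_smul_left, hee, hwe, he1]
  have hau : ⟪a, u⟫ = 0 := by
    rw [hu]; simp [inner_add_right, inner_smul_right, haw, hae]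
  set d := ⟪g, w⟫ • w + ⟪g, e⟫ • e - ⟪g, u⟫ • u with hd
  have had : ⟪a, d⟫ = 0 := by
    simp [hd, inner_add_right, inner_sub_right, inner_smul_right, haw, hae, hau]
  have hsum : a + d = g - ⟪g, u⟫ • u := by rw [ha, hd]; abel
  have hnorm : ‖a‖ ^ 2 ≤ ‖g - ⟪g, u⟫ • u‖ ^ 2 := by
    rw [← hsum, norm_add_sq_real, had]
    nlinarith [sq_nonneg ‖d‖]
  -- the maximizer of ⟪·, u⟫ over K lies in the base
  have hcontu : Continuous fun x : EuclideanSpace ℝ (Fin (n + 1)) => ⟪x, u⟫ :=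
    continuous_id.inner continuous_const
  obtain ⟨x, hxK, hxmax⟩ := hKcpt.exists_isMaxOn ⟨0, h0K⟩ hcontu.continuousOn
  have hKu : hK u = ⟪x, u⟫ := by
    rw [hhK]
    exact IsGreatest.csSup_eq ⟨⟨x, hxK, rfl⟩, by rintro _ ⟨y, hy, rfl⟩; exact hxmax hy⟩
  have hxnormal : ∀ y ∈ K, ⟪y - x, u⟫ ≤ 0 := by
    intro y hy
    rw [inner_sub_left]
    have h2 : (⟪y, u⟫ : ℝ) ≤ ⟪x, u⟫ := hxmax hy
    linarith
  have hxe : ⟪x, e⟫ = 0 := by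
    rcases lt_or_eq_of_le (hKupper x hxK) with hpos | h0
    · have := hnormal x hxK hpos u hu1 hxnormal
      rw [hue] at this
      exact absurd this (lt_irrefl _)
    · exact h0.symm
  set S := sSup ((fun x => ⟪x, w⟫) '' (K ∩ {x | ⟪x, e⟫ = 0})) with hS
  have hcontw : Continuous fun x : EuclideanSpace ℝ (Fin (n + 1)) => ⟪x, w⟫ :=
    continuous_id.inner continuous_const
  have hbdd : BddAbove ((fun x => ⟪x, w⟫) '' (K ∩ {x | ⟪x, e⟫ = 0})) :=
    ((hKcpt.image hcontw).bddAbove).mono (Set.image_mono Set.inter_subset_left)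
  have hxw_le : ⟪x, w⟫ ≤ S := le_csSup hbdd ⟨x, ⟨hxK, hxe⟩, rfl⟩
  have hSnonneg : (0:ℝ) ≤ S := by
    refine le_csSup hbdd ⟨(0 : EuclideanSpace ℝ (Fin (n + 1))), ⟨h0K, by simp⟩, by simp⟩
  have hKu_nonneg : 0 ≤ hK u := by
    rw [hKu]
    have := hxmax h0K
    simpa using this
  have hKu_le : hK u ≤ Real.sin θ * S := by
    have hx : ⟪x, u⟫ = Real.sin θ * ⟪x, w⟫ := by
      rw [hu, inner_add_right, real_inner_smul_right, real_inner_smul_right, hxe,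
        mul_zero, add_zero]
    rw [hKu, hx]
    exact mul_le_mul_of_nonneg_left hxw_le hsin.le
  have hrpow : hK u ^ γ ≤ Real.sin θ ^ γ * S ^ γ := by
    calc hK u ^ γ ≤ (Real.sin θ * S) ^ γ :=
          Real.rpow_le_rpow hKu_nonneg hKu_le hγ.1.le
      _ = _ := Real.mul_rpow hsin.le hSnonneg
  have hmain := hgrad u hu1 hue.ge
  rw [← hg] at hmain
  calc ‖a‖ ^ 2 ≤ ‖g - ⟪g, u⟫ • u‖ ^ 2 := hnorm
    _ ≤ C₀ * hK u ^ γ * R ^ (2 - γ) := hmain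
    _ ≤ C₀ * (Real.sin θ ^ γ * S ^ γ) * R ^ (2 - γ) := by gcongr
    _ = C₀ * Real.sin θ ^ γ * R ^ (2 - γ) * S ^ γ := by ring
end

section
/- Let k ≥ 1 be an integer, let p be real with 1 < p < k + 1, let θ ∈ (0, π/2), and let c ≥ 1, c₀ > 0, c₁ > 0. Then there exists a constant C₁ > 0, depending only on k, p, θ, c, c₀, c₁, with the following property: whenever positive real numbers R, H, r_in, r_out satisfy (i) r_in ≤ r_out ≤ c · r_in, (ii) c₀ ≤ R ≤ r_out + H, (iii) H ≤ tan θ · r_in, and (iv) H ≥ c₁ · R^{(1−p)/k} · r_in², then C₁^{−1} ≤ cos θ · H and R ≤ C₁. (Consequently, any quantity s trapped between cos θ · H and R admits the two-sided bound C₁^{−1} ≤ s ≤ C₁.) -/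
open Real

/-- The real-variable skeleton of the `C⁰` estimate for the even
capillary `L_p`-curvature problem: for `k ≥ 1`, `1 < p < k + 1`, `θ ∈ (0, π/2)`,
`c ≥ 1`, `c₀ > 0`, `c₁ > 0`, there is a constant `C₁ > 0` (depending only on
`k, p, θ, c, c₀, c₁`) such that whenever positive reals `R, H, r_in, r_out` satisfy
(i) `r_in ≤ r_out ≤ c · r_in`, (ii) `c₀ ≤ R ≤ r_out + H`, (iii) `H ≤ tan θ · r_in`, and
(iv) `H ≥ c₁ · R^((1-p)/k) · r_in²`, one has `C₁⁻¹ ≤ cos θ · H` and `R ≤ C₁`. -/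
theorem c0_estimate_skeleton (k : ℕ) (hk : 1 ≤ k) (p θ c c₀ c₁ : ℝ)
    (hp : 1 < p) (hpk : p < k + 1) (hθ : θ ∈ Set.Ioo 0 (π / 2))
    (hc : 1 ≤ c) (hc₀ : 0 < c₀) (hc₁ : 0 < c₁) :
    ∃ C₁ : ℝ, 0 < C₁ ∧
      ∀ R H rin rout : ℝ, 0 < R → 0 < H → 0 < rin → 0 < rout →
        rin ≤ rout → rout ≤ c * rin →
        c₀ ≤ R → R ≤ rout + H →
        H ≤ Real.tan θ * rin →
        c₁ * R ^ ((1 - p) / (k : ℝ)) * rin ^ 2 ≤ H →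
        C₁⁻¹ ≤ Real.cos θ * H ∧ R ≤ C₁ := by
  obtain ⟨hθ0, hθ2⟩ := hθ
  have ht : 0 < Real.tan θ := Real.tan_pos_of_pos_of_lt_pi_div_two hθ0 hθ2
  have hcos : 0 < Real.cos θ :=
    Real.cos_pos_of_mem_Ioo ⟨by linarith [Real.pi_div_two_pos], hθ2⟩
  set t := Real.tan θ with htdef
  have hkpos : (0:ℝ) < k := by exact_mod_cast hk
  set q : ℝ := (p - 1) / k with hqdef
  have hq0 : 0 < q := div_pos (by linarith) hkpos
  have hq1 : q < 1 := (div_lt_one hkpos).2 (by linarith)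
  have hct : 0 < c + t := by linarith
  set A : ℝ := (c + t) * t / c₁ with hAdef
  have hA : 0 < A := by positivity
  set Rmax : ℝ := max 1 (A ^ (1 / (1 - q))) with hRmaxdef
  have hRmax : 0 < Rmax := lt_of_lt_of_le one_pos (le_max_left _ _)
  set m : ℝ := Real.cos θ * (c₁ * Rmax ^ (-q) * (c₀ / (c + t)) ^ 2) with hmdef
  have hm : 0 < m := by positivity
  refine ⟨max Rmax m⁻¹, lt_of_lt_of_le hRmax (le_max_left _ _), ?_⟩
  intro R H rin rout hR hH hrin hrout h1 h2 h3 h4 h5 h6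
  have hexp : (1 - p) / (k : ℝ) = -q := by
    rw [hqdef]; ring
  rw [hexp] at h6
  have hRq : 0 < R ^ (-q) := Real.rpow_pos_of_pos hR _
  have hRqp : 0 < R ^ q := Real.rpow_pos_of_pos hR _
  -- c₁ * R^(-q) * rin ≤ t
  have step1 : c₁ * R ^ (-q) * rin ≤ t := by
    have h7 : c₁ * R ^ (-q) * rin ^ 2 ≤ t * rin := h6.trans h5
    nlinarith
  -- R ≤ (c+t) * rin
  have step2 : R ≤ (c + t) * rin := by nlinarith
  -- rin ≤ t / c₁ * R ^ q
  have hinv : R ^ (-q) = (R ^ q)⁻¹ := by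
    rw [Real.rpow_neg hR.le]
  have step3 : rin ≤ t / c₁ * R ^ q := by
    rw [hinv] at step1
    rw [div_mul_eq_mul_div, le_div_iff₀ hc₁]
    calc rin * c₁ = c₁ * (R ^ q)⁻¹ * rin * R ^ q := by
          field_simp
      _ ≤ t * R ^ q := by
          apply mul_le_mul_of_nonneg_right step1 hRqp.le
  -- R^(1-q) ≤ A
  have step4 : R ^ (1 - q) ≤ A := by
    have hRA : R ≤ A * R ^ q := by
      calc R ≤ (c + t) * rin := step2
        _ ≤ (c + t) * (t / c₁ * R ^ q) := by
            apply mul_le_mul_of_nonneg_left step3 hct.le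
        _ = A * R ^ q := by rw [hAdef]; ring
    have : R ^ (1 - q) = R * (R ^ q)⁻¹ := by
      rw [sub_eq_add_neg, Real.rpow_add hR, Real.rpow_one, hinv.symm, Real.rpow_neg hR.le]
    rw [this]
    rw [mul_inv_le_iff₀ hRqp]
    exact hRA
  -- R ≤ Rmax
  have h1q : 0 < 1 - q := by linarith
  have hRRmax : R ≤ Rmax := by
    have h8 : (R ^ (1 - q)) ^ (1 / (1 - q)) ≤ A ^ (1 / (1 - q)) :=
      Real.rpow_le_rpow (Real.rpow_nonneg hR.le _) step4 (by positivity)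
    have h9 : (R ^ (1 - q)) ^ (1 / (1 - q)) = R := by
      rw [← Real.rpow_mul hR.le, mul_one_div, div_self h1q.ne', Real.rpow_one]
    rw [h9] at h8
    exact h8.trans (le_max_right 1 _)
  -- Rmax^(-q) ≤ R^(-q)
  have hmono : Rmax ^ (-q) ≤ R ^ (-q) := by
    rw [Real.rpow_neg hR.le, Real.rpow_neg hRmax.le]
    exact inv_anti₀ hRqp (Real.rpow_le_rpow hR.le hRRmax hq0.le)
  -- rin ≥ c₀ / (c + t)
  have hrinlb : c₀ / (c + t) ≤ rin := by
    rw [div_le_iff₀ hct]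
    linarith [h3.trans step2]
  -- cos θ * H ≥ m
  have hmH : m ≤ Real.cos θ * H := by
    have h10 : c₁ * Rmax ^ (-q) * (c₀ / (c + t)) ^ 2 ≤ c₁ * R ^ (-q) * rin ^ 2 := by
      have h11 : 0 ≤ c₀ / (c + t) := by positivity
      have hsq : (c₀ / (c + t)) ^ 2 ≤ rin ^ 2 := pow_le_pow_left₀ h11 hrinlb 2
      have hRm : 0 < Rmax ^ (-q) := Real.rpow_pos_of_pos hRmax _
      exact mul_le_mul (mul_le_mul_of_nonneg_left hmono hc₁.le) hsq
        (pow_nonneg h11 2) (by positivity)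
    rw [hmdef]
    exact mul_le_mul_of_nonneg_left (h10.trans h6) hcos.le
  constructor
  · have : (max Rmax m⁻¹)⁻¹ ≤ m := by
      rw [inv_le_comm₀ (lt_of_lt_of_le hRmax (le_max_left _ _)) hm]
      exact le_max_right _ _
    exact this.trans hmH
  · exact hRRmax.trans (le_max_left _ _)
end
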